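/- A simplicial complex C is unimodular if and only if G^p(C), the complex obtained from C by adjoining p ghost vertices, is unimodular, for every p ≥ 0. -/

import Mathlib

open Finset

/-- A (finite) simplicial complex on ground set `V`: a collection of finite subsets of `V`
closed under taking subsets.  (The empty collection, the void complex, is allowed.) -/
structure SComplex (V : Type) where
  faces : Finset (Finset V)
  down_closed : ∀ s ∈ faces, ∀ t ⊆ s, t ∈ faces

/-- An integer matrix, viewed over `ℚ`, has a rank. -/
noncomputable def intRank {m n : Type} [Fintype n] (A : Matrix m n ℤ) : ℕ :=
  (A.map ((↑·) : ℤ → ℚ)).rank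

/-- An integer matrix `A` of rank `d` is unimodular if there is a nonzero `λ` such that
every `d × d` minor of `A` equals `0`, `λ` or `-λ`. -/
def IntUnimodular {m n : Type} [Fintype m] [Fintype n] (A : Matrix m n ℤ) : Prop :=
  ∃ lam : ℤ, lam ≠ 0 ∧ ∀ (r : Fin (intRank A) → m) (c : Fin (intRank A) → n),
    (A.submatrix r c).det = 0 ∨ (A.submatrix r c).det = lam ∨ (A.submatrix r c).det = -lam

/-- A real matrix `A` of rank `d` is unimodular if there is a nonzero `λ` such that
every `d × d` minor of `A` equals `0`, `λ` or `-λ`. -/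
def RealUnimodular {m n : Type} [Fintype m] [Fintype n] (A : Matrix m n ℝ) : Prop :=
  ∃ lam : ℝ, lam ≠ 0 ∧ ∀ (r : Fin A.rank → m) (c : Fin A.rank → n),
    (A.submatrix r c).det = 0 ∨ (A.submatrix r c).det = lam ∨ (A.submatrix r c).det = -lam

namespace SComplex

variable {V W : Type}

/-- The facets of a simplicial complex: its inclusion-maximal faces. -/
def facets [DecidableEq V] (C : SComplex V) : Finset (Finset V) :=
  C.faces.filter fun F => ∀ G ∈ C.faces, F ⊆ G → F = G

/-- The design matrix `A_{C,d}` of the hierarchical model given by the complex `C` and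
the table dimension vector `d`.  Columns are indexed by tuples `i ∈ ∏ v, [d v]`, rows by
pairs `(F, j)` with `F` a facet and `j ∈ ∏_{v ∈ F} [d v]`; the entry is `1` iff the
restriction of `i` to `F` is `j`. -/
def designMatrixD [DecidableEq V] (C : SComplex V) (d : V → ℕ) :
    Matrix ((F : {F // F ∈ C.facets}) × ((v : {v // v ∈ F.1}) → Fin (d v.1)))
      ((v : V) → Fin (d v)) ℤ :=
  fun r i => if ∀ v : {v // v ∈ r.1.1}, i v.1 = r.2 v then 1 else 0

/-- The binary design matrix `A_C = A_{C,2}`. -/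
def designMatrix [DecidableEq V] (C : SComplex V) := designMatrixD C fun _ => 2

/-- A simplicial complex is unimodular if its binary design matrix is unimodular. -/
def IsUnimodular [DecidableEq V] [Fintype V] (C : SComplex V) : Prop :=
  IntUnimodular (designMatrix C)

/-- The Alexander dual `C* = {S : Sᶜ ∉ C}`. -/
def dual [DecidableEq V] [Fintype V] (C : SComplex V) : SComplex V where
  faces := univ.filter fun s => sᶜ ∉ C.faces
  down_closed := by
    intro s hs t ht
    simp only [mem_filter, mem_univ, true_and] at hs ⊢
    intro h
    exact hs (C.down_closed _ h _ (compl_subset_compl.mpr ht))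

/-- The induced subcomplex of `C` on a vertex subset `A`. -/
def induce [DecidableEq V] (C : SComplex V) (A : Finset V) :
    SComplex {v // v ∈ A} where
  faces := univ.filter fun s => s.map (Function.Embedding.subtype fun v => v ∈ A) ∈ C.faces
  down_closed := by
    intro s hs t ht
    simp only [mem_filter, mem_univ, true_and] at hs ⊢
    exact C.down_closed _ hs _ (map_subset_map.mpr ht)

/-- The link of a set `S` in `C`, as a complex on the ground set `Sᶜ`:
`link_S(C) = {F \ S : F ∈ C, S ⊆ F}`. -/
def link [DecidableEq V] [Fintype V] (C : SComplex V) (S : Finset V) :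
    SComplex {v // v ∈ Sᶜ} where
  faces := univ.filter fun s =>
    s.map (Function.Embedding.subtype fun v => v ∈ Sᶜ) ∪ S ∈ C.faces
  down_closed := by
    intro s hs t ht
    simp only [mem_filter, mem_univ, true_and] at hs ⊢
    exact C.down_closed _ hs _ (union_subset_union_left (map_subset_map.mpr ht))

/-- The minor `link_R(C \ S)` of `C`, a complex on the ground set `(R ∪ S)ᶜ`. -/
def minorAt [DecidableEq V] [Fintype V] (C : SComplex V) (R S : Finset V) :
    SComplex {v // v ∈ (R ∪ S)ᶜ} where
  faces := univ.filter fun s =>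
    s.map (Function.Embedding.subtype fun v => v ∈ (R ∪ S)ᶜ) ∪ R ∈ C.faces
  down_closed := by
    intro s hs t ht
    simp only [mem_filter, mem_univ, true_and] at hs ⊢
    exact C.down_closed _ hs _ (union_subset_union_left (map_subset_map.mpr ht))

/-- Isomorphism of simplicial complexes: a bijection of ground sets carrying faces to faces. -/
def Isomorphic [DecidableEq W] (C : SComplex V) (D : SComplex W) : Prop :=
  ∃ e : V ≃ W, ∀ s : Finset V, s ∈ C.faces ↔ s.image (⇑e) ∈ D.faces

/-- `D` is a minor of `C` if `D` is isomorphic to `link_R(C \ S)` for some face `R` of `C`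
and vertex set `S` disjoint from `R`. -/
def IsMinor [DecidableEq V] [Fintype V] [DecidableEq W] (D : SComplex W) (C : SComplex V) :
    Prop :=
  ∃ R S : Finset V, Disjoint R S ∧ R ∈ C.faces ∧ D.Isomorphic (C.minorAt R S)

/-- The simplicial complex generated by a given collection of sets. -/
def gen [DecidableEq V] [Fintype V] (gens : Finset (Finset V)) : SComplex V where
  faces := univ.filter fun s => ∃ g ∈ gens, s ⊆ g
  down_closed := by
    intro s hs t ht
    simp only [mem_filter, mem_univ, true_and] at hs ⊢
    obtain ⟨g, hg, hsg⟩ := hs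
    exact ⟨g, hg, ht.trans hsg⟩

/-- The cone over `C`: one new vertex (the last one) is added to every face. -/
def cone {n : ℕ} (C : SComplex (Fin n)) : SComplex (Fin (n + 1)) where
  faces := univ.filter fun s => (univ.filter fun v : Fin n => v.castSucc ∈ s) ∈ C.faces
  down_closed := by
    intro s hs t ht
    simp only [mem_filter, mem_univ, true_and] at hs ⊢
    refine C.down_closed _ hs _ ?_
    intro v hv
    simp only [mem_filter, mem_univ, true_and] at hv ⊢
    exact ht hv

/-- Adding one ghost vertex (the last one) to `C`. -/
def ghost {n : ℕ} (C : SComplex (Fin n)) : SComplex (Fin (n + 1)) where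
  faces := univ.filter fun s => Fin.last n ∉ s ∧
    (univ.filter fun v : Fin n => v.castSucc ∈ s) ∈ C.faces
  down_closed := by
    intro s hs t ht
    simp only [mem_filter, mem_univ, true_and] at hs ⊢
    refine ⟨fun h => hs.1 (ht h), C.down_closed _ hs.2 _ ?_⟩
    intro v hv
    simp only [mem_filter, mem_univ, true_and] at hv ⊢
    exact ht hv

/-- The iterated cone `cone^p(C)`. -/
def conePow {n : ℕ} : (p : ℕ) → SComplex (Fin n) → SComplex (Fin (n + p))
  | 0, C => C
  | p + 1, C => cone (conePow p C)

/-- Adding `p` ghost vertices `G^p(C)`. -/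
def ghostPow {n : ℕ} : (p : ℕ) → SComplex (Fin n) → SComplex (Fin (n + p))
  | 0, C => C
  | p + 1, C => ghost (ghostPow p C)

/-- The embedding `Fin n ↪ Fin (n+1)` by `castSucc`. -/
def castSuccEmb' {n : ℕ} : Fin n ↪ Fin (n + 1) :=
  ⟨Fin.castSucc, Fin.castSucc_injective n⟩

/-- The Lawrence lifting `Λ(C)`: its facets are the old ground set `[n]` (a big facet)
together with `F ∪ {n+1}` for each facet `F` of `C`. -/
def lawrence {n : ℕ} (C : SComplex (Fin n)) : SComplex (Fin (n + 1)) :=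
  gen (insert ((univ : Finset (Fin n)).map castSuccEmb')
    (C.facets.image fun F => insert (Fin.last n) (F.map castSuccEmb')))

/-- The disjoint union `Δ_m ⊔ Δ_k` of an `m`-simplex (on the first `m+1` vertices) and
a `k`-simplex (on the remaining `k+1` vertices). -/
def disjSimplices (m k : ℕ) : SComplex (Fin (m + k + 2)) :=
  gen {univ.filter fun x : Fin (m + k + 2) => (x : ℕ) ≤ m,
    univ.filter fun x : Fin (m + k + 2) => m < (x : ℕ)}

/-- The full simplex on `k` vertices (i.e. `Δ_{k-1}`; for `k = 0` this is `Δ_{-1} = {∅}`). -/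
def fullSimplexC (k : ℕ) : SComplex (Fin k) where
  faces := univ
  down_closed := fun _ _ t _ => mem_univ t

/-- The void complex `Δ_{-2} = {}`. -/
def voidC : SComplex (Fin 0) where
  faces := ∅
  down_closed := by simp

/-- `∂Δ_k ⊔ {v}`: the boundary of a `k`-simplex together with one extra disjoint vertex. -/
def bdyDisjPt (k : ℕ) : SComplex (Fin (k + 2)) where
  faces := univ.filter fun s =>
    s ⊂ (univ.filter fun x : Fin (k + 2) => (x : ℕ) < k + 1) ∨ s = {Fin.last (k + 1)}
  down_closed := by
    intro s hs t ht
    simp only [mem_filter, mem_univ, true_and] at hs ⊢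
    rcases hs with hs | rfl
    · exact Or.inl (lt_of_le_of_lt ht hs)
    · rcases Finset.subset_singleton_iff.mp ht with rfl | rfl
      · refine Or.inl (Finset.empty_ssubset.mpr ⟨⟨0, by omega⟩, ?_⟩)
        simp
      · exact Or.inr rfl

/-- The path `P_4` on four vertices. -/
def P4 : SComplex (Fin 4) := gen {{0, 1}, {1, 2}, {2, 3}}

/-- The four-cycle `C_4`. -/
def C4 : SComplex (Fin 4) := gen {{0, 1}, {1, 2}, {2, 3}, {0, 3}}

/-- The boundary of the octahedron, with antipodal vertex pairs `(0,3)`, `(1,4)`, `(2,5)`. -/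
def O6 : SComplex (Fin 6) :=
  gen {{0, 1, 2}, {0, 1, 5}, {0, 4, 2}, {0, 4, 5}, {3, 1, 2}, {3, 1, 5}, {3, 4, 2}, {3, 4, 5}}

/-- The complex `J_1` on five vertices with facets `12, 15, 234, 345`. -/
def J1 : SComplex (Fin 5) := gen {{0, 1}, {0, 4}, {1, 2, 3}, {2, 3, 4}}

/-- The complex `J_2` on five vertices with facets `12, 235, 34, 145`. -/
def J2 : SComplex (Fin 5) := gen {{0, 1}, {1, 2, 4}, {2, 3}, {0, 3, 4}}

/-- The nuclear complexes (on `Fin` ground sets), built from disjoint unions of two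
simplices, duals thereof, and simplices, by repeatedly coning, adding ghost vertices
and taking Lawrence liftings. -/
inductive Nuclear : {n : ℕ} → SComplex (Fin n) → Prop
  | lawrence {n : ℕ} {D : SComplex (Fin n)} : Nuclear D → Nuclear D.lawrence
  | ghost {n : ℕ} {D : SComplex (Fin n)} : Nuclear D → Nuclear D.ghost
  | coneDisj (p m k : ℕ) : Nuclear (conePow p (disjSimplices m k))
  | coneDualDisj (p m k : ℕ) : Nuclear (conePow p (dual (disjSimplices (m + 1) (k + 1))))
  | simplex (k : ℕ) : Nuclear (fullSimplexC k)
  | void : Nuclear voidC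

/-- A complex on an arbitrary ground set is nuclear if it is isomorphic to a nuclear
complex on a `Fin` ground set. -/
def IsNuclear (C : SComplex V) : Prop :=
  ∃ (k : ℕ) (D : SComplex (Fin k)), Nuclear D ∧ C.Isomorphic D

/-- `C` is β-avoiding if no minor of `C` is isomorphic to `P_4`, `O_6`, `O_6*`, `J_1`,
`J_1*`, `J_2`, or `∂Δ_k ⊔ {v}` for some `k ≥ 1`. -/
def BetaAvoiding [DecidableEq V] [Fintype V] (C : SComplex V) : Prop :=
  ¬ IsMinor P4 C ∧ ¬ IsMinor O6 C ∧ ¬ IsMinor (dual O6) C ∧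
  ¬ IsMinor J1 C ∧ ¬ IsMinor (dual J1) C ∧ ¬ IsMinor J2 C ∧
  ∀ k : ℕ, 1 ≤ k → ¬ IsMinor (bdyDisjPt k) C

/-- The 1-skeleton of a complex, as a simple graph. -/
def oneSkeleton [DecidableEq V] (C : SComplex V) : SimpleGraph V where
  Adj u v := u ≠ v ∧ ({u, v} : Finset V) ∈ C.faces
  symm := by
    refine ⟨fun u v h => ?_⟩
    exact ⟨h.1.symm, by rw [Finset.pair_comm]; exact h.2⟩
  loopless := by
    refine ⟨fun u h => ?_⟩
    exact h.1 rfl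

/-- The non-ghost vertices of `C`: those `v` with `{v}` a face. -/
def nonGhost [DecidableEq V] [Fintype V] (C : SComplex V) : Finset V :=
  univ.filter fun v => ({v} : Finset V) ∈ C.faces

/-- `S` is a minimal nonface of `C`: not a face, but all proper subsets are faces. -/
def MinNonface (C : SComplex V) (S : Finset V) : Prop :=
  S ∉ C.faces ∧ ∀ t ⊂ S, t ∈ C.faces

end SComplex


section General

/-- Rank over ℚ is preserved by row-equiv + column-surjective submatrix. -/
lemma rankQ_submatrix_eq {m m' n n' : Type} [Fintype m] [Fintype m'] [Fintype n] [Fintype n']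
    (A : Matrix m n ℚ) (e : m' ≃ m) (g : n' → n) (hg : Function.Surjective g) :
    (A.submatrix e g).rank = A.rank := by
  rw [Matrix.rank_eq_finrank_span_row, Matrix.rank_eq_finrank_span_row]
  have hrange : Set.range (A.submatrix e g) = (LinearMap.funLeft ℚ ℚ g) '' Set.range A := by
    ext x
    constructor
    · rintro ⟨i', rfl⟩
      exact ⟨A (e i'), ⟨e i', rfl⟩, rfl⟩
    · rintro ⟨y, ⟨i, rfl⟩, rfl⟩
      exact ⟨e.symm i, by ext j; simp [Matrix.submatrix, LinearMap.funLeft]⟩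
  change Module.finrank ℚ (Submodule.span ℚ (Set.range (A.submatrix e g))) =
    Module.finrank ℚ (Submodule.span ℚ (Set.range A))
  rw [hrange, Submodule.span_image]
  exact (Submodule.equivMapOfInjective _
    (LinearMap.funLeft_injective_of_surjective ℚ ℚ g hg) _).finrank_eq.symm

lemma intRank_submatrix_eq {m m' n n' : Type} [Fintype m] [Fintype m'] [Fintype n] [Fintype n']
    (A : Matrix m n ℤ) (e : m' ≃ m) (g : n' → n) (hg : Function.Surjective g) :
    intRank (A.submatrix e g) = intRank A := by
  unfold intRank
  have : (A.submatrix e g).map ((↑·) : ℤ → ℚ) = (A.map ((↑·) : ℤ → ℚ)).submatrix e g := rfl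
  rw [this, rankQ_submatrix_eq _ e g hg]

lemma intUnimodular_submatrix_iff {m m' n n' : Type} [Fintype m] [Fintype m'] [Fintype n]
    [Fintype n'] (A : Matrix m n ℤ) (e : m' ≃ m) (g : n' → n) (hg : Function.Surjective g) :
    IntUnimodular (A.submatrix e g) ↔ IntUnimodular A := by
  obtain ⟨h, hgh⟩ := hg.hasRightInverse
  have hrank := intRank_submatrix_eq A e g hg
  unfold IntUnimodular
  rw [hrank]
  constructor
  · rintro ⟨lam, h0, hm⟩
    refine ⟨lam, h0, fun r c => ?_⟩
    have : A.submatrix r c = (A.submatrix e g).submatrix (e.symm ∘ r) (h ∘ c) := by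
      ext i j
      simp [Matrix.submatrix, hgh (c j)]
    rw [this]
    exact hm _ _
  · rintro ⟨lam, h0, hm⟩
    refine ⟨lam, h0, fun r c => ?_⟩
    have : (A.submatrix e g).submatrix r c = A.submatrix (e ∘ r) (g ∘ c) := rfl
    rw [this]
    exact hm _ _

end General

namespace SComplex

variable {n : ℕ} (C : SComplex (Fin n))

lemma mem_ghost_faces {s : Finset (Fin (n + 1))} :
    s ∈ C.ghost.faces ↔ ∃ t ∈ C.faces, s = t.map castSuccEmb' := by
  simp only [ghost, mem_filter, mem_univ, true_and]
  constructor
  · rintro ⟨h1, h2⟩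
    refine ⟨_, h2, ?_⟩
    ext v'
    simp only [Finset.mem_map, mem_filter, mem_univ, true_and, castSuccEmb',
      Function.Embedding.coeFn_mk]
    constructor
    · intro hv'
      have hne : v' ≠ Fin.last n := fun h => h1 (h ▸ hv')
      exact ⟨v'.castPred hne, by rwa [Fin.castSucc_castPred], Fin.castSucc_castPred _ _⟩
    · rintro ⟨v, hv, rfl⟩
      exact hv
  · rintro ⟨t, ht, rfl⟩
    constructor
    · intro hmem
      obtain ⟨v, _, hv⟩ := Finset.mem_map.mp hmem
      exact absurd hv (Fin.castSucc_lt_last v).ne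
    · convert ht using 1
      ext v
      simp [castSuccEmb']

lemma mem_ghost_facets {s : Finset (Fin (n + 1))} :
    s ∈ C.ghost.facets ↔ ∃ t ∈ C.facets, s = t.map castSuccEmb' := by
  simp only [facets, mem_filter]
  constructor
  · rintro ⟨hs, hmax⟩
    obtain ⟨t, ht, rfl⟩ := (C.mem_ghost_faces).mp hs
    refine ⟨t, ⟨ht, fun G hG hsub => ?_⟩, rfl⟩
    have := hmax (G.map castSuccEmb') (C.mem_ghost_faces.mpr ⟨G, hG, rfl⟩)
      (Finset.map_subset_map.mpr hsub)
    exact Finset.map_injective _ this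
  · rintro ⟨t, ⟨ht, htmax⟩, rfl⟩
    refine ⟨C.mem_ghost_faces.mpr ⟨t, ht, rfl⟩, fun G hG hsub => ?_⟩
    obtain ⟨u, hu, rfl⟩ := (C.mem_ghost_faces).mp hG
    rw [htmax u hu (Finset.map_subset_map.mp hsub)]

/-- Equiv between facets of `C` and facets of `C.ghost`. -/
noncomputable def ghostFacetEquiv :
    {F // F ∈ C.facets} ≃ {F // F ∈ C.ghost.facets} :=
  Equiv.ofBijective
    (fun F => ⟨F.1.map castSuccEmb', C.mem_ghost_facets.mpr ⟨F.1, F.2, rfl⟩⟩)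
    ⟨fun F G h => Subtype.ext (Finset.map_injective _ (congrArg Subtype.val h)),
     fun F' => by
      obtain ⟨t, ht, hEq⟩ := C.mem_ghost_facets.mp F'.2
      exact ⟨⟨t, ht⟩, Subtype.ext hEq.symm⟩⟩

/-- Equiv between vertices of a face and of its image under `castSuccEmb'`. -/
noncomputable def ghostVertEquiv (s : Finset (Fin n)) :
    {v // v ∈ s} ≃ {v // v ∈ s.map castSuccEmb'} :=
  Equiv.ofBijective (fun v => ⟨castSuccEmb' v.1, Finset.mem_map_of_mem _ v.2⟩)
    ⟨fun v w h => Subtype.ext (castSuccEmb'.injective (congrArg Subtype.val h)),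
     fun v' => by
      obtain ⟨v, hv, hEq⟩ := Finset.mem_map.mp v'.2
      exact ⟨⟨v, hv⟩, Subtype.ext hEq⟩⟩

/-- The row equivalence between the design matrices of `C` and `C.ghost`. -/
noncomputable def ghostRowEquiv :
    ((F : {F // F ∈ C.facets}) × ((v : {v // v ∈ F.1}) → Fin 2)) ≃
    ((F : {F // F ∈ C.ghost.facets}) × ((v : {v // v ∈ F.1}) → Fin 2)) :=
  Equiv.sigmaCongr C.ghostFacetEquiv
    (fun F => Equiv.arrowCongr (ghostVertEquiv F.1) (Equiv.refl (Fin 2)))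

lemma ghost_designMatrix_apply (r : (F : {F // F ∈ C.facets}) × ((v : {v // v ∈ F.1}) → Fin 2))
    (i : Fin (n + 1) → Fin 2) :
    C.ghost.designMatrix (C.ghostRowEquiv r) i = C.designMatrix r (fun v => i v.castSucc) := by
  obtain ⟨F, j⟩ := r
  show (if ∀ v' : {v // v ∈ F.1.map castSuccEmb'}, i v'.1 = j ((ghostVertEquiv F.1).symm v')
      then (1:ℤ) else 0)
    = (if ∀ v : {v // v ∈ F.1}, i v.1.castSucc = j v then (1:ℤ) else 0)
  congr 1
  simp only [eq_iff_iff]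
  constructor
  · intro h v
    have h1 := h (ghostVertEquiv F.1 v)
    rw [Equiv.symm_apply_apply] at h1
    exact h1
  · intro h v'
    have h1 := h ((ghostVertEquiv F.1).symm v')
    have h2 : ((ghostVertEquiv F.1) ((ghostVertEquiv F.1).symm v')).1 = v'.1 :=
      congrArg Subtype.val (Equiv.apply_symm_apply _ _)
    rw [← h2]
    exact h1

lemma ghost_designMatrix_eq :
    C.ghost.designMatrix =
      (C.designMatrix).submatrix (C.ghostRowEquiv).symm (fun i v => i v.castSucc) := by
  ext r i
  conv_lhs => rw [← (C.ghostRowEquiv).apply_symm_apply r]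
  rw [ghost_designMatrix_apply]
  rfl

lemma ghost_isUnimodular_iff : C.ghost.IsUnimodular ↔ C.IsUnimodular := by
  unfold IsUnimodular
  rw [ghost_designMatrix_eq]
  apply intUnimodular_submatrix_iff
  intro i0
  exact ⟨Fin.snoc i0 0, funext fun v => Fin.snoc_castSucc _ _ _⟩

end SComplex


/-- A simplicial complex `C` is unimodular iff `G^p(C)`, obtained by adjoining `p` ghost
vertices, is unimodular, for every `p ≥ 0`. -/
theorem isUnimodular_iff_ghostPow_isUnimodular {n : ℕ} (C : SComplex (Fin n)) (p : ℕ) :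
    C.IsUnimodular ↔ (SComplex.ghostPow p C).IsUnimodular := by
  induction p with
  | zero => exact Iff.rfl
  | succ p ih => exact ih.trans (SComplex.ghost_isUnimodular_iff _).symm
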